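/- arXiv:1712.03572 — 2 statements merged into one kernel-verified Lean document; each statement's English description precedes it below -/
import Mathlib

section
/- In a weighted recursive tree on n nodes with positive weights (w_i), the expected depth of node n equals the sum over i from 1 to n-1 of w_i / (w_1 + ... + w_i). -/
open MeasureTheory Finset Filter

/-- Attachment probability in a weighted recursive tree: node `j` attaches to node `i`. -/
noncomputable def wrtStep (w : ℕ → ℝ) (j i : ℕ) : ℝ :=
  if j ≤ 1 then (if i = 0 then 1 else 0)
  else if 1 ≤ i ∧ i < j then w i / (∑ k ∈ Finset.Icc 1 (j - 1), w k) else 0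

/-- The law of a weighted recursive tree on `n` nodes, as a measure on parent functions
`ω : ℕ → ℕ`, where `ω j` is the parent of node `j` (and `ω j = 0` for irrelevant `j`). -/
noncomputable def wrtMeasure (w : ℕ → ℝ) (n : ℕ) : Measure (ℕ → ℕ) :=
  ∑ t : Fin (n + 1) → Fin (n + 1),
    (ENNReal.ofReal (∏ j : Fin (n + 1), wrtStep w j.val (t j).val)) •
      Measure.dirac (fun j => if h : j < n + 1 then (t ⟨j, h⟩).val else 0)

/-- `i` is an ancestor of `m`: some iterate of the parent map sends `m` to `i`. -/
def isAncestor (ω : ℕ → ℕ) (i m : ℕ) : Prop := ∃ l, 0 < l ∧ ω^[l] m = i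

/-- The depth of node `m`: its number of ancestors (nodes on the path from the root to `m`). -/
noncomputable def depth (ω : ℕ → ℕ) (m : ℕ) : ℕ :=
  Set.ncard {i | 1 ≤ i ∧ isAncestor ω i m}

/-- The height of the tree on nodes `1, …, n`: the maximal depth of a node. -/
noncomputable def height (ω : ℕ → ℕ) (n : ℕ) : ℕ :=
  (Finset.Icc 1 n).sup (fun i => depth ω i)

/-- The number of branches: the number of children of the root. -/
def branches (ω : ℕ → ℕ) (n : ℕ) : ℕ :=
  ((Finset.Icc 2 n).filter (fun j => ω j = 1)).card

open scoped Classical in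
/-- The number of leaves: nodes with no children among nodes `1, …, n`. -/
noncomputable def numLeaves (ω : ℕ → ℕ) (n : ℕ) : ℕ :=
  ((Finset.Icc 1 n).filter (fun i => ∀ j ∈ Finset.Icc (i + 1) n, ω j ≠ i)).card

-- auxiliary defs
noncomputable def wrtP (w : ℕ → ℝ) (n : ℕ) (t : Fin (n+1) → Fin (n+1)) : ℝ :=
  ∏ j : Fin (n+1), wrtStep w j.val (t j).val

def wrtOm (n : ℕ) (t : Fin (n+1) → Fin (n+1)) : ℕ → ℕ :=
  fun j => if h : j < n + 1 then (t ⟨j, h⟩).val else 0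

def wrtGood {n : ℕ} (t : Fin (n+1) → Fin (n+1)) : Prop :=
  ∀ j : Fin (n+1), (j.val ≤ 1 → (t j).val = 0) ∧
    (2 ≤ j.val → 1 ≤ (t j).val ∧ (t j).val < j.val)

section lemmas
variable {w : ℕ → ℝ}

lemma Spos (hw : ∀ i, 0 < w i) {i : ℕ} (hi : 1 ≤ i) : 0 < ∑ k ∈ Finset.Icc 1 i, w k :=
  Finset.sum_pos (fun k _ => hw k) (Finset.nonempty_Icc.mpr hi)

lemma step_nonneg (hw : ∀ i, 0 < w i) (j i : ℕ) : 0 ≤ wrtStep w j i := by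
  unfold wrtStep
  split_ifs with h1 h2 h3
  · norm_num
  · norm_num
  · exact div_nonneg (hw i).le (Spos hw (by omega)).le
  · norm_num

lemma sum_step (hw : ∀ i, 0 < w i) {n j : ℕ} (hj : j ≤ n) :
    ∑ i : Fin (n+1), wrtStep w j i.val = 1 := by
  rw [Fin.sum_univ_eq_sum_range (fun i => wrtStep w j i)]
  by_cases h1 : j ≤ 1
  · rw [Finset.sum_eq_single_of_mem 0 (Finset.mem_range.mpr (by omega))]
    · simp [wrtStep, h1]
    · intro b _ hb; simp [wrtStep, h1, hb]
  · have h2 : 2 ≤ j := by omega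
    rw [← Finset.sum_subset (s₁ := Finset.Icc 1 (j-1))
        (fun x hx => Finset.mem_range.mpr (by simp only [Finset.mem_Icc] at hx; omega))
        (fun x _ hx => by
          simp only [Finset.mem_Icc] at hx
          unfold wrtStep
          rw [if_neg h1, if_neg (by omega)])]
    have : ∀ i ∈ Finset.Icc 1 (j-1), wrtStep w j i = w i / ∑ k ∈ Finset.Icc 1 (j-1), w k := by
      intro i hi
      simp only [Finset.mem_Icc] at hi
      unfold wrtStep
      rw [if_neg h1, if_pos (by omega)]
    rw [Finset.sum_congr rfl this, ← Finset.sum_div, div_self (Spos hw (by omega)).ne']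

lemma wrtP_nonneg (hw : ∀ i, 0 < w i) (n : ℕ) (t : Fin (n+1) → Fin (n+1)) :
    0 ≤ wrtP w n t :=
  Finset.prod_nonneg fun j _ => step_nonneg hw _ _

lemma wrtP_mass (hw : ∀ i, 0 < w i) (n : ℕ) :
    ∑ t : Fin (n+1) → Fin (n+1), wrtP w n t = 1 := by
  have h := Finset.prod_univ_sum (fun _ : Fin (n+1) => (Finset.univ : Finset (Fin (n+1))))
    (fun j i => wrtStep w j.val i.val)
  rw [Fintype.piFinset_univ] at h
  unfold wrtP
  rw [← h]
  exact Finset.prod_eq_one fun j _ => sum_step hw (by omega : j.val ≤ n)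

lemma good_of_ne (n : ℕ) {t : Fin (n+1) → Fin (n+1)} (h : wrtP w n t ≠ 0) : wrtGood t := by
  intro j
  constructor
  · intro hj
    by_contra hc
    exact h (Finset.prod_eq_zero (Finset.mem_univ j) (by simp [wrtStep, hj, hc]))
  · intro hj
    by_contra hc
    apply h
    apply Finset.prod_eq_zero (Finset.mem_univ j)
    unfold wrtStep
    rw [if_neg (by omega), if_neg hc]
end lemmas

section omfacts
variable {n : ℕ} {t : Fin (n+1) → Fin (n+1)}

lemma om_lt (h : wrtGood t) {q : ℕ} (h1 : 1 ≤ q) (h2 : q ≤ n) : wrtOm n t q < q := by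
  have hq : q < n + 1 := by omega
  have : wrtOm n t q = (t ⟨q, hq⟩).val := by simp [wrtOm, hq]
  rw [this]
  by_cases hq1 : q ≤ 1
  · have := (h ⟨q, hq⟩).1 hq1
    omega
  · exact ((h ⟨q, hq⟩).2 (show 2 ≤ q by omega)).2

lemma om_le (h : wrtGood t) (q : ℕ) : wrtOm n t q ≤ q := by
  by_cases hq : q < n + 1
  · by_cases h1 : 1 ≤ q
    · exact (om_lt h h1 (by omega)).le
    · have : q = 0 := by omega
      subst this
      have h0 := (h ⟨0, hq⟩).1 (by norm_num)
      simp only [wrtOm, hq, dif_pos]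
      omega
  · simp [wrtOm, hq]

lemma iter_lt (h : wrtGood t) {p : ℕ} (h1 : 1 ≤ p) (h2 : p ≤ n) {l : ℕ} (hl : 1 ≤ l) :
    (wrtOm n t)^[l] p < p := by
  induction l with
  | zero => omega
  | succ k ih =>
    rw [Function.iterate_succ_apply']
    rcases Nat.eq_zero_or_pos k with hk | hk
    · subst hk; simpa using om_lt h h1 h2
    · exact lt_of_le_of_lt (om_le h _) (ih hk)

lemma anc_lt (h : wrtGood t) {p i : ℕ} (h1 : 1 ≤ p) (h2 : p ≤ n)
    (ha : isAncestor (wrtOm n t) i p) : i < p := by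
  obtain ⟨l, hl, he⟩ := ha
  rw [← he]
  exact iter_lt h h1 h2 hl

lemma ancset_finite (h : wrtGood t) {p : ℕ} (h1 : 1 ≤ p) (h2 : p ≤ n) :
    {i | 1 ≤ i ∧ isAncestor (wrtOm n t) i p}.Finite :=
  (Set.finite_Iio p).subset fun i hi => anc_lt h h1 h2 hi.2

lemma depth_one (h : wrtGood t) (hn : 1 ≤ n) : depth (wrtOm n t) 1 = 0 := by
  have : {i | 1 ≤ i ∧ isAncestor (wrtOm n t) i 1} = ∅ := by
    ext i
    simp only [Set.mem_setOf_eq, Set.mem_empty_iff_false, iff_false, not_and]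
    intro h1 ha
    have := anc_lt h le_rfl hn ha
    omega
  rw [depth, this, Set.ncard_empty]

lemma isAncestor_iff (ω : ℕ → ℕ) (i m : ℕ) :
    isAncestor ω i m ↔ i = ω m ∨ isAncestor ω i (ω m) := by
  constructor
  · rintro ⟨l, hl, he⟩
    cases l with
    | zero => omega
    | succ k =>
      rw [Function.iterate_succ_apply] at he
      rcases Nat.eq_zero_or_pos k with hk | hk
      · subst hk; exact Or.inl he.symm
      · exact Or.inr ⟨k, hk, he⟩
  · rintro (h | ⟨l, hl, he⟩)
    · exact ⟨1, one_pos, h.symm⟩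
    · exact ⟨l + 1, by omega, by rw [Function.iterate_succ_apply]; exact he⟩

lemma depth_rec (h : wrtGood t) {m : ℕ} (h2 : 2 ≤ m) (hn : m ≤ n) :
    depth (wrtOm n t) m = 1 + depth (wrtOm n t) (wrtOm n t m) := by
  have hq : m < n + 1 := by omega
  have hg := (h ⟨m, hq⟩).2 (show 2 ≤ m from h2)
  have homm : wrtOm n t m = (t ⟨m, hq⟩).val := by simp [wrtOm, hq]
  have hpm : 1 ≤ wrtOm n t m := by rw [homm]; exact hg.1
  have hlt : wrtOm n t m < m := by rw [homm]; exact hg.2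
  have hset : {i | 1 ≤ i ∧ isAncestor (wrtOm n t) i m}
      = insert (wrtOm n t m) {i | 1 ≤ i ∧ isAncestor (wrtOm n t) i (wrtOm n t m)} := by
    ext i
    simp only [Set.mem_setOf_eq, Set.mem_insert_iff]
    rw [isAncestor_iff (wrtOm n t) i m]
    constructor
    · rintro ⟨h1, (hi | hi)⟩
      · exact Or.inl hi
      · exact Or.inr ⟨h1, hi⟩
    · rintro (rfl | ⟨h1, hi⟩)
      · exact ⟨hpm, Or.inl rfl⟩
      · exact ⟨h1, Or.inr hi⟩
  rw [depth, hset, Set.ncard_insert_of_notMem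
      (fun hmem => absurd (anc_lt h hpm (by omega) hmem.2) (lt_irrefl _))
      (ancset_finite h hpm (by omega)), depth]
  omega

end omfacts

lemma iterate_eq {ω ω' : ℕ → ℕ} {m : ℕ} (h1 : ∀ q, q ≠ m → ω q = ω' q)
    (h2 : ∀ q, q ≠ m → ω q ≤ q) {c : ℕ} (hc : c < m) (l : ℕ) :
    ω^[l] c = ω'^[l] c ∧ ω^[l] c ≤ c := by
  induction l with
  | zero => simp
  | succ k ih =>
    obtain ⟨he, hle⟩ := ih
    have hx : ω^[k] c ≠ m := by omega
    rw [Function.iterate_succ_apply', Function.iterate_succ_apply', ← he]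
    exact ⟨h1 _ hx, le_trans (h2 _ hx) hle⟩

lemma depth_congr {ω ω' : ℕ → ℕ} {m : ℕ} (h1 : ∀ q, q ≠ m → ω q = ω' q)
    (h2 : ∀ q, q ≠ m → ω q ≤ q) {c : ℕ} (hc : c < m) :
    depth ω c = depth ω' c := by
  have key : ∀ i, isAncestor ω i c ↔ isAncestor ω' i c := by
    intro i
    constructor
    · rintro ⟨l, hl, he⟩
      exact ⟨l, hl, by rw [← (iterate_eq h1 h2 hc l).1]; exact he⟩
    · rintro ⟨l, hl, he⟩
      exact ⟨l, hl, by rw [(iterate_eq h1 h2 hc l).1]; exact he⟩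
  unfold depth
  congr 1
  ext i
  simp only [Set.mem_setOf_eq, key]

lemma alg_lemma {w : ℕ → ℝ} (hw : ∀ i, 0 < w i) : ∀ m : ℕ,
    ∑ c ∈ Finset.Icc 1 m, w c * (1 + ∑ i ∈ Finset.Icc 1 (c-1), w i / ∑ k ∈ Finset.Icc 1 i, w k)
      = (∑ k ∈ Finset.Icc 1 m, w k) * ∑ i ∈ Finset.Icc 1 m, w i / ∑ k ∈ Finset.Icc 1 i, w k := by
  intro m
  induction m with
  | zero => rw [Finset.Icc_eq_empty (by omega)]; simp
  | succ m ih =>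
    rw [Finset.sum_Icc_succ_top (by omega : 1 ≤ m + 1),
        Finset.sum_Icc_succ_top (by omega : 1 ≤ m + 1) w,
        Finset.sum_Icc_succ_top (by omega : 1 ≤ m + 1)
          (fun i => w i / ∑ k ∈ Finset.Icc 1 i, w k), ih]
    have hB : ∑ k ∈ Finset.Icc 1 (m+1), w k = ∑ k ∈ Finset.Icc 1 m, w k + w (m+1) :=
      Finset.sum_Icc_succ_top (by omega) w
    have hS : (0:ℝ) < ∑ k ∈ Finset.Icc 1 m, w k + w (m+1) := by
      rw [← hB]; exact Spos hw (by omega)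
    rw [hB]
    have hne := hS.ne'
    simp only [Nat.add_sub_cancel]
    field_simp
    ring

noncomputable def wrtQ (w : ℕ → ℝ) (n : ℕ) (mF : Fin (n+1)) (t : Fin (n+1) → Fin (n+1)) : ℝ :=
  ∏ j ∈ Finset.univ.erase mF, wrtStep w j.val (t j).val

lemma wrtQ_update (w : ℕ → ℝ) (n : ℕ) (mF : Fin (n+1)) (t : Fin (n+1) → Fin (n+1))
    (c : Fin (n+1)) : wrtQ w n mF (Function.update t mF c) = wrtQ w n mF t :=
  Finset.prod_congr rfl fun j hj => by
    rw [Function.update_of_ne (Finset.ne_of_mem_erase hj)]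

lemma wrtPQ (w : ℕ → ℝ) (n : ℕ) (mF : Fin (n+1)) (t : Fin (n+1) → Fin (n+1)) :
    wrtP w n t = wrtStep w mF.val (t mF).val * wrtQ w n mF t := by
  rw [wrtP, wrtQ]
  exact (Finset.mul_prod_erase Finset.univ
    (fun j : Fin (n+1) => wrtStep w j.val (t j).val) (Finset.mem_univ mF)).symm

lemma wrtQ_good {w : ℕ → ℝ} {n : ℕ} (mF : Fin (n+1)) (t : Fin (n+1) → Fin (n+1))
    (hQ : wrtQ w n mF t ≠ 0) : ∀ q, q ≠ mF.val → wrtOm n t q ≤ q := by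
  intro q hqm
  by_cases hqn : q < n + 1
  · have hj : (⟨q, hqn⟩ : Fin (n+1)) ∈ Finset.univ.erase mF :=
      Finset.mem_erase.mpr ⟨Fin.ne_of_val_ne hqm, Finset.mem_univ _⟩
    have hstep : wrtStep w q (t ⟨q, hqn⟩).val ≠ 0 := by
      intro h0
      exact hQ (Finset.prod_eq_zero hj h0)
    have homq : wrtOm n t q = (t ⟨q, hqn⟩).val := by simp [wrtOm, hqn]
    rw [homq]
    unfold wrtStep at hstep
    by_cases hq1 : q ≤ 1
    · rw [if_pos hq1] at hstep
      by_cases h0 : (t ⟨q, hqn⟩).val = 0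
      · omega
      · rw [if_neg h0] at hstep; exact absurd rfl hstep
    · rw [if_neg hq1] at hstep
      by_cases hcond : 1 ≤ (t ⟨q, hqn⟩).val ∧ (t ⟨q, hqn⟩).val < q
      · omega
      · rw [if_neg hcond] at hstep; exact absurd rfl hstep
  · simp [wrtOm, hqn]

lemma depth_upd {w : ℕ → ℝ} {n : ℕ} (mF : Fin (n+1)) {t : Fin (n+1) → Fin (n+1)}
    (hQ : wrtQ w n mF t ≠ 0) (c : Fin (n+1)) {cv : ℕ} (hcv : cv < mF.val) :
    depth (wrtOm n (Function.update t mF c)) cv = depth (wrtOm n t) cv := by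
  apply depth_congr (m := mF.val) ?_ ?_ hcv
  · intro q hq
    by_cases hqn : q < n + 1
    · simp [wrtOm, hqn,
        Function.update_of_ne (Fin.ne_of_val_ne (show ((⟨q, hqn⟩ : Fin (n+1))).val ≠ mF.val from hq)) c t]
    · simp [wrtOm, hqn]
  · intro q hq
    refine wrtQ_good (w := w) mF (Function.update t mF c) ?_ q hq
    rw [wrtQ_update]; exact hQ

lemma fiber_const {w : ℕ → ℝ} {n : ℕ} (mF : Fin (n+1)) (c c' : Fin (n+1)) {cv : ℕ}
    (hcv : cv < mF.val) :
    ∑ t ∈ Finset.univ.filter (fun t : Fin (n+1) → Fin (n+1) => t mF = c'),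
        wrtQ w n mF t * (1 + (depth (wrtOm n t) cv : ℝ))
      = ∑ t ∈ Finset.univ.filter (fun t : Fin (n+1) → Fin (n+1) => t mF = c),
        wrtQ w n mF t * (1 + (depth (wrtOm n t) cv : ℝ)) := by
  apply Finset.sum_nbij' (i := fun t => Function.update t mF c)
    (j := fun t => Function.update t mF c')
  · intro t _; simp [Finset.mem_filter, Function.update_self]
  · intro t _; simp [Finset.mem_filter, Function.update_self]
  · intro t ht
    simp only [Finset.mem_filter] at ht
    rw [Function.update_idem, ← ht.2, Function.update_eq_self]
  · intro t ht
    simp only [Finset.mem_filter] at ht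
    rw [Function.update_idem, ← ht.2, Function.update_eq_self]
  · intro t _
    rw [wrtQ_update]
    rcases eq_or_ne (wrtQ w n mF t) 0 with h0 | h0
    · rw [h0]; ring
    · rw [depth_upd mF h0 c hcv]

lemma Edepth_eq {w : ℕ → ℝ} (hw : ∀ i, 0 < w i) {n : ℕ} (hn1 : 1 ≤ n) :
    ∀ m, 1 ≤ m → m ≤ n →
    ∑ t : Fin (n+1) → Fin (n+1), wrtP w n t * (depth (wrtOm n t) m : ℝ)
      = ∑ i ∈ Finset.Icc 1 (m-1), w i / ∑ k ∈ Finset.Icc 1 i, w k := by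
  intro m
  induction m using Nat.strong_induction_on with
  | _ m ih =>
  intro hm1 hmn
  rcases eq_or_lt_of_le hm1 with h1 | hm2
  · rw [← h1, Finset.Icc_eq_empty (by omega : ¬ (1:ℕ) ≤ 1 - 1)]
    have hz : ∀ t : Fin (n+1) → Fin (n+1), wrtP w n t * (depth (wrtOm n t) 1 : ℝ) = 0 := by
      intro t
      rcases eq_or_ne (wrtP w n t) 0 with h0 | h0
      · rw [h0, zero_mul]
      · rw [depth_one (good_of_ne n h0) hn1]; simp
    rw [Finset.sum_congr rfl fun t _ => hz t]
    simp
  · have hm2' : 2 ≤ m := hm2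
    have hq : m < n + 1 := by omega
    have hstep_pos_range : ∀ c : Fin (n+1), wrtStep w m c.val ≠ 0 → 1 ≤ c.val ∧ c.val < m := by
      intro c hc
      unfold wrtStep at hc
      rw [if_neg (by omega)] at hc
      by_cases hcond : 1 ≤ c.val ∧ c.val < m
      · exact hcond
      · rw [if_neg hcond] at hc; exact absurd rfl hc
    have hC2 : ∀ (c : Fin (n+1)) (cv : ℕ), cv < m →
        ∑ t ∈ Finset.univ.filter (fun t : Fin (n+1) → Fin (n+1) => t ⟨m, hq⟩ = c),
            wrtQ w n ⟨m, hq⟩ t * (1 + (depth (wrtOm n t) cv : ℝ))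
          = ∑ t : Fin (n+1) → Fin (n+1), wrtP w n t * (1 + (depth (wrtOm n t) cv : ℝ)) := by
      intro c cv hcv
      have key : ∀ c' : Fin (n+1),
          ∑ t ∈ Finset.univ.filter (fun t : Fin (n+1) → Fin (n+1) => t ⟨m, hq⟩ = c'),
              wrtP w n t * (1 + (depth (wrtOm n t) cv : ℝ))
            = wrtStep w m c'.val *
              ∑ t ∈ Finset.univ.filter (fun t : Fin (n+1) → Fin (n+1) => t ⟨m, hq⟩ = c),
                wrtQ w n ⟨m, hq⟩ t * (1 + (depth (wrtOm n t) cv : ℝ)) := by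
        intro c'
        rw [← fiber_const (⟨m, hq⟩ : Fin (n+1)) c c' (show cv < m from hcv), Finset.mul_sum]
        apply Finset.sum_congr rfl
        intro t ht
        have htm : t ⟨m, hq⟩ = c' := (Finset.mem_filter.mp ht).2
        rw [wrtPQ w n ⟨m, hq⟩ t, htm, mul_assoc]
      symm
      calc ∑ t : Fin (n+1) → Fin (n+1), wrtP w n t * (1 + (depth (wrtOm n t) cv : ℝ))
          = ∑ c' : Fin (n+1),
              ∑ t ∈ Finset.univ.filter (fun t : Fin (n+1) → Fin (n+1) => t ⟨m, hq⟩ = c'),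
                wrtP w n t * (1 + (depth (wrtOm n t) cv : ℝ)) :=
            (Finset.sum_fiberwise Finset.univ (fun t => t ⟨m, hq⟩)
              (fun t => wrtP w n t * (1 + (depth (wrtOm n t) cv : ℝ)))).symm
        _ = ∑ c' : Fin (n+1), wrtStep w m c'.val *
              ∑ t ∈ Finset.univ.filter (fun t : Fin (n+1) → Fin (n+1) => t ⟨m, hq⟩ = c),
                wrtQ w n ⟨m, hq⟩ t * (1 + (depth (wrtOm n t) cv : ℝ)) :=
            Finset.sum_congr rfl fun c' _ => key c'
        _ = (∑ c' : Fin (n+1), wrtStep w m c'.val) *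
              ∑ t ∈ Finset.univ.filter (fun t : Fin (n+1) → Fin (n+1) => t ⟨m, hq⟩ = c),
                wrtQ w n ⟨m, hq⟩ t * (1 + (depth (wrtOm n t) cv : ℝ)) :=
            (Finset.sum_mul _ _ _).symm
        _ = ∑ t ∈ Finset.univ.filter (fun t : Fin (n+1) → Fin (n+1) => t ⟨m, hq⟩ = c),
              wrtQ w n ⟨m, hq⟩ t * (1 + (depth (wrtOm n t) cv : ℝ)) := by
            rw [sum_step hw (by omega : m ≤ n), one_mul]
    have hXsplit : ∀ cv : ℕ,
        ∑ t : Fin (n+1) → Fin (n+1), wrtP w n t * (1 + (depth (wrtOm n t) cv : ℝ))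
          = 1 + ∑ t : Fin (n+1) → Fin (n+1), wrtP w n t * (depth (wrtOm n t) cv : ℝ) := by
      intro cv
      simp only [mul_add, mul_one]
      rw [Finset.sum_add_distrib, wrtP_mass hw n]
    have hA : ∑ t : Fin (n+1) → Fin (n+1), wrtP w n t * (depth (wrtOm n t) m : ℝ)
        = ∑ t : Fin (n+1) → Fin (n+1),
            wrtP w n t * (1 + (depth (wrtOm n t) (t ⟨m, hq⟩).val : ℝ)) := by
      apply Finset.sum_congr rfl
      intro t _
      rcases eq_or_ne (wrtP w n t) 0 with h0 | h0
      · rw [h0, zero_mul, zero_mul]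
      · have hg := good_of_ne n h0
        have homm : wrtOm n t m = (t ⟨m, hq⟩).val := by simp [wrtOm, hq]
        rw [depth_rec hg hm2' hmn, homm]
        push_cast
        ring
    rw [hA, ← Finset.sum_fiberwise Finset.univ (fun t => t ⟨m, hq⟩)
          (fun t => wrtP w n t * (1 + (depth (wrtOm n t) (t ⟨m, hq⟩).val : ℝ)))]
    have hB : ∀ c : Fin (n+1),
        ∑ t ∈ Finset.univ.filter (fun t : Fin (n+1) → Fin (n+1) => t ⟨m, hq⟩ = c),
            wrtP w n t * (1 + (depth (wrtOm n t) (t ⟨m, hq⟩).val : ℝ))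
          = wrtStep w m c.val *
              (1 + ∑ i ∈ Finset.Icc 1 (c.val - 1), w i / ∑ k ∈ Finset.Icc 1 i, w k) := by
      intro c
      rcases eq_or_ne (wrtStep w m c.val) 0 with h0 | h0
      · rw [h0, zero_mul]
        apply Finset.sum_eq_zero
        intro t ht
        have htm : t ⟨m, hq⟩ = c := (Finset.mem_filter.mp ht).2
        rw [wrtPQ w n ⟨m, hq⟩ t, htm, h0, zero_mul, zero_mul]
      · obtain ⟨hc1, hclt⟩ := hstep_pos_range c h0
        have hfib : ∑ t ∈ Finset.univ.filter (fun t : Fin (n+1) → Fin (n+1) => t ⟨m, hq⟩ = c),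
            wrtP w n t * (1 + (depth (wrtOm n t) (t ⟨m, hq⟩).val : ℝ))
            = wrtStep w m c.val *
              ∑ t ∈ Finset.univ.filter (fun t : Fin (n+1) → Fin (n+1) => t ⟨m, hq⟩ = c),
                wrtQ w n ⟨m, hq⟩ t * (1 + (depth (wrtOm n t) c.val : ℝ)) := by
          rw [Finset.mul_sum]
          apply Finset.sum_congr rfl
          intro t ht
          have htm : t ⟨m, hq⟩ = c := (Finset.mem_filter.mp ht).2
          rw [wrtPQ w n ⟨m, hq⟩ t, htm, mul_assoc]
        rw [hfib, hC2 c c.val hclt, hXsplit c.val, ih c.val hclt hc1 (by omega)]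
    rw [Finset.sum_congr rfl fun c _ => hB c]
    rw [Fin.sum_univ_eq_sum_range (fun c : ℕ =>
        wrtStep w m c * (1 + ∑ i ∈ Finset.Icc 1 (c - 1), w i / ∑ k ∈ Finset.Icc 1 i, w k))]
    rw [← Finset.sum_subset (s₁ := Finset.Icc 1 (m-1))
        (fun x hx => Finset.mem_range.mpr (by simp only [Finset.mem_Icc] at hx; omega))
        (fun x _ hx => by
          simp only [Finset.mem_Icc] at hx
          have : wrtStep w m x = 0 := by
            unfold wrtStep
            rw [if_neg (by omega), if_neg (by omega)]
          rw [this, zero_mul])]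
    have hconv : ∀ x ∈ Finset.Icc 1 (m-1),
        wrtStep w m x * (1 + ∑ i ∈ Finset.Icc 1 (x - 1), w i / ∑ k ∈ Finset.Icc 1 i, w k)
          = (w x * (1 + ∑ i ∈ Finset.Icc 1 (x - 1), w i / ∑ k ∈ Finset.Icc 1 i, w k))
              / ∑ k ∈ Finset.Icc 1 (m-1), w k := by
      intro x hx
      simp only [Finset.mem_Icc] at hx
      unfold wrtStep
      rw [if_neg (by omega), if_pos (by omega)]
      ring
    rw [Finset.sum_congr rfl hconv, ← Finset.sum_div, alg_lemma hw (m-1)]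
    exact mul_div_cancel_left₀ _ (Spos hw (by omega)).ne'


/-- The expected depth of node `n` equals `∑_{i=1}^{n-1} w i / (w 1 + ⋯ + w i)`. -/
theorem expected_depth (w : ℕ → ℝ) (hw : ∀ i, 0 < w i) (n : ℕ) (hn : 2 ≤ n) :
    ∫ ω, (depth ω n : ℝ) ∂(wrtMeasure w n) =
      ∑ i ∈ Finset.Icc 1 (n - 1), w i / ∑ k ∈ Finset.Icc 1 i, w k := by
  rw [wrtMeasure]
  rw [integral_finset_sum_measure (fun t _ =>
    ((integrable_const _).congr (ae_eq_dirac (fun ω => (depth ω n : ℝ))).symm).smul_measure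
      ENNReal.ofReal_ne_top)]
  have key : ∀ t : Fin (n+1) → Fin (n+1),
      ∫ ω, (depth ω n : ℝ) ∂((ENNReal.ofReal (∏ j : Fin (n+1), wrtStep w j.val (t j).val)) •
        Measure.dirac (fun j => if h : j < n + 1 then (t ⟨j, h⟩).val else 0))
      = wrtP w n t * (depth (wrtOm n t) n : ℝ) := by
    intro t
    rw [integral_smul_measure, integral_dirac]
    rw [smul_eq_mul, ENNReal.toReal_ofReal (Finset.prod_nonneg fun j _ => step_nonneg hw _ _)]
    rfl
  rw [Finset.sum_congr rfl fun t _ => key t]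
  exact Edepth_eq hw (by omega : 1 ≤ n) n (by omega) le_rfl
end

section
/- Let L_n^w be the number of leaves of a weighted recursive tree of size n whose weight sequence satisfies w_i = 1 for all i > k, and L_{n-k+1}^θ the number of leaves of a Hoppe tree of size n-k+1 with root weight θ = w_1 + ... + w_k coupled via the root-splitting construction. Then L_{n-k+1}^θ ≤ L_n^w ≤ L_{n-k+1}^θ + k - 1 almost surely under the coupling. -/
open MeasureTheory Finset Filter

/-! ### Auxiliary machinery for the root-splitting coupling -/

/-- Collapse map on node labels: the first `k` nodes are merged into node `1`. -/
def fmapLC (k i : ℕ) : ℕ := if i ≤ k then 1 else i - k + 1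

/-- Contract the first `k` nodes of a parent function on `n` nodes into a single root. -/
def contractLC (k m : ℕ) (ω : ℕ → ℕ) : ℕ → ℕ :=
  fun j => if 2 ≤ j ∧ j < m + 1 then fmapLC k (ω (j + k - 1)) else 0

/-- The parent function associated to a table `t`. -/
noncomputable def xptLC (n : ℕ) (t : Fin (n + 1) → Fin (n + 1)) : ℕ → ℕ :=
  fun j => if h : j < n + 1 then (t ⟨j, h⟩).val else 0

lemma fmapLC_pos (k i : ℕ) : 1 ≤ fmapLC k i := by unfold fmapLC; split_ifs <;> omega

lemma fmapLC_eq_one_iff (k x : ℕ) (hk : 1 ≤ k) : fmapLC k x = 1 ↔ x ≤ k := by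
  unfold fmapLC; split_ifs <;> omega

lemma fmapLC_eq_iff (k x a : ℕ) (hk : 1 ≤ k) (ha : 2 ≤ a) :
    fmapLC k x = a ↔ x = a + k - 1 := by
  unfold fmapLC; split_ifs <;> omega

lemma xptLC_le (n : ℕ) (t : Fin (n + 1) → Fin (n + 1)) (j : ℕ) : xptLC n t j ≤ n := by
  unfold xptLC
  split
  · exact Nat.lt_succ_iff.mp (t _).isLt
  · omega

/-- The table of the contracted tree. -/
noncomputable def sigmaLC (k n : ℕ) (t : Fin (n + 1) → Fin (n + 1)) :
    Fin (n - k + 1 + 1) → Fin (n - k + 1 + 1) :=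
  fun j => ⟨contractLC k (n - k + 1) (xptLC n t) j.val, by
    have hx : xptLC n t (j.val + k - 1) ≤ n := xptLC_le n t _
    unfold contractLC fmapLC
    split_ifs <;> omega⟩

lemma xpt_sigma (k n : ℕ) (t : Fin (n + 1) → Fin (n + 1)) :
    xptLC (n - k + 1) (sigmaLC k n t) = contractLC k (n - k + 1) (xptLC n t) := by
  funext j
  unfold xptLC sigmaLC
  by_cases h : j < n - k + 1 + 1
  · rw [dif_pos h]
    rfl
  · rw [dif_neg h]
    unfold contractLC
    rw [if_neg (by omega)]

lemma wrtStep_nonneg (w : ℕ → ℝ) (hw : ∀ i, 0 < w i) (j i : ℕ) : 0 ≤ wrtStep w j i := by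
  unfold wrtStep
  split_ifs with h1 h2 h3
  · norm_num
  · norm_num
  · exact div_nonneg (hw i).le (Finset.sum_nonneg fun i _ => (hw i).le)
  · norm_num

lemma row_sum (w : ℕ → ℝ) (hw : ∀ i, 0 < w i) (N j : ℕ) (hj : j ≤ N) :
    ∑ i ∈ Finset.range (N + 1), wrtStep w j i = 1 := by
  by_cases hj1 : j ≤ 1
  · simp only [wrtStep, if_pos hj1]
    rw [Finset.sum_ite_eq' (Finset.range (N + 1)) 0 (fun _ => (1 : ℝ))]
    simp
  · have hS : 0 < ∑ i ∈ Icc 1 (j - 1), w i :=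
      Finset.sum_pos (fun i _ => hw i) (Finset.nonempty_Icc.mpr (by omega))
    simp only [wrtStep, if_neg hj1]
    rw [← Finset.sum_filter]
    have hfil : (Finset.range (N + 1)).filter (fun i => 1 ≤ i ∧ i < j) = Icc 1 (j - 1) := by
      ext i; simp only [Finset.mem_filter, Finset.mem_range, Finset.mem_Icc]; omega
    rw [hfil, ← Finset.sum_div, div_self hS.ne']

lemma Icc_one_eq_Ioc (a : ℕ) : Icc 1 a = Ioc 0 a := Finset.Icc_add_one_left_eq_Ioc 0 a

lemma sum_tail (w : ℕ → ℝ) (k : ℕ) (hconst : ∀ i, k < i → w i = 1) (a : ℕ) (ha : k ≤ a) :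
    ∑ i ∈ Icc 1 a, w i = (∑ i ∈ Icc 1 k, w i) + ((a - k : ℕ) : ℝ) := by
  rw [Icc_one_eq_Ioc, Icc_one_eq_Ioc, ← Finset.sum_Ioc_consecutive w (Nat.zero_le k) ha]
  congr 1
  rw [Finset.sum_congr rfl (fun i hi => hconst i (Finset.mem_Ioc.mp hi).1)]
  simp [Nat.card_Ioc]

lemma sum_tail' (w : ℕ → ℝ) (k : ℕ) (a : ℕ) (ha : 1 ≤ a) :
    ∑ i ∈ Icc 1 a, (fun i => if i = 1 then ∑ j ∈ Finset.Icc 1 k, w j else 1) i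
      = (∑ j ∈ Finset.Icc 1 k, w j) + ((a - 1 : ℕ) : ℝ) := by
  have h := sum_tail (fun i => if i = 1 then ∑ j ∈ Finset.Icc 1 k, w j else 1) 1
    (fun i hi => by simp [Nat.ne_of_gt hi]) a ha
  simpa using h

lemma fiber_sum (w : ℕ → ℝ) (k n : ℕ) (hk : 1 ≤ k) (hkn : k ≤ n)
    (hconst : ∀ i, k < i → w i = 1) (j s' : ℕ) (hj : k + 1 ≤ j) (hjn : j ≤ n) :
    ∑ i ∈ (Finset.range (n + 1)).filter (fun i => fmapLC k i = s'), wrtStep w j i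
      = wrtStep (fun i => if i = 1 then ∑ l ∈ Finset.Icc 1 k, w l else 1) (j - k + 1) s' := by
  set w' : ℕ → ℝ := fun i => if i = 1 then ∑ l ∈ Finset.Icc 1 k, w l else 1 with hw'
  have hSS : ∑ i ∈ Icc 1 (j - 1), w i = ∑ i ∈ Icc 1 (j - k + 1 - 1), w' i := by
    rw [sum_tail w k hconst (j - 1) (by omega), sum_tail' w k (j - k + 1 - 1) (by omega)]
    congr 2
    omega
  have hj2 : ¬ (j ≤ 1) := by omega
  have hj2' : ¬ (j - k + 1 ≤ 1) := by omega
  rcases Nat.lt_or_ge s' 2 with hs | hs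
  · interval_cases s'
    · have hemp : (Finset.range (n + 1)).filter (fun i => fmapLC k i = 0) = ∅ :=
        Finset.filter_eq_empty_iff.mpr (fun hi _ => by have := fmapLC_pos k hi; omega)
      rw [hemp]
      simp only [Finset.sum_empty, wrtStep, if_neg hj2']
      rw [if_neg (by omega)]
    · have hfil : (Finset.range (n + 1)).filter (fun i => fmapLC k i = 1)
          = Finset.range (k + 1) := by
        ext i
        rw [Finset.mem_filter, Finset.mem_range, Finset.mem_range]
        unfold fmapLC
        split_ifs <;> omega
      rw [hfil]
      have hterm : ∀ i ∈ Finset.range (k + 1), wrtStep w j i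
          = if 1 ≤ i then w i / (∑ l ∈ Icc 1 (j - 1), w l) else 0 := by
        intro i hi
        simp only [Finset.mem_range] at hi
        simp only [wrtStep, if_neg hj2]
        split_ifs with h1 h2 h3 <;> first | rfl | omega
      rw [Finset.sum_congr rfl hterm, ← Finset.sum_filter]
      have hfil2 : (Finset.range (k + 1)).filter (fun i => 1 ≤ i) = Icc 1 k := by
        ext i; simp only [Finset.mem_filter, Finset.mem_range, Finset.mem_Icc]; omega
      rw [hfil2, ← Finset.sum_div, hSS]
      simp only [wrtStep, if_neg hj2']
      rw [if_pos (by omega)]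
      simp [w']
  · have hfil : ∀ i ∈ Finset.range (n + 1),
        (if fmapLC k i = s' then wrtStep w j i else 0)
          = (if i = s' + k - 1 then wrtStep w j i else 0) := by
      intro i _
      have : fmapLC k i = s' ↔ i = s' + k - 1 := by unfold fmapLC; split_ifs <;> omega
      simp only [this]
    rw [Finset.sum_filter, Finset.sum_congr rfl hfil,
      Finset.sum_ite_eq' (Finset.range (n + 1)) (s' + k - 1) (wrtStep w j)]
    simp only [Finset.mem_range, wrtStep, if_neg hj2, if_neg hj2', ← hSS]
    have hwv : w (s' + k - 1) = 1 := hconst _ (by omega)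
    have hwv' : w' s' = 1 := by simp [w']; omega
    rw [hwv']
    split_ifs with h1 h2 h3 h4 h5 <;> first | rfl | (exfalso; omega) | rw [hwv]

lemma numLeaves_eq' (ω₀ : ℕ → ℕ) (N : ℕ)
    (inst : DecidablePred (fun i => ∀ j ∈ Finset.Icc (i + 1) N, ω₀ j ≠ i)) :
    numLeaves ω₀ N = ((Finset.Icc 1 N).filter
      (fun i => ∀ j ∈ Finset.Icc (i + 1) N, ω₀ j ≠ i)).card := by
  rw [numLeaves]
  congr!

lemma leaves_det (k n : ℕ) (hk : 1 ≤ k) (hkn : k ≤ n) (ω : ℕ → ℕ)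
    (hω : ∀ j, 2 ≤ j → j ≤ n → 1 ≤ ω j) :
    numLeaves (contractLC k (n - k + 1) ω) (n - k + 1) ≤ numLeaves ω n ∧
    numLeaves ω n ≤ numLeaves (contractLC k (n - k + 1) ω) (n - k + 1) + (k - 1) := by
  set m := n - k + 1 with hm
  set ω' := contractLC k m ω with hω'def
  have hm1 : 1 ≤ m := by omega
  have hcv : ∀ j, 2 ≤ j → j ≤ m → ω' j = fmapLC k (ω (j + k - 1)) := by
    intro j h2 h3
    simp only [hω'def, contractLC]
    rw [if_pos ⟨h2, by omega⟩]
  letI inst : DecidablePred (fun i => ∀ j ∈ Finset.Icc (i + 1) n, ω j ≠ i) :=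
    fun a => Finset.decidableDforallFinset
  letI inst' : DecidablePred (fun i => ∀ j ∈ Finset.Icc (i + 1) m, ω' j ≠ i) :=
    fun a => Finset.decidableDforallFinset
  rw [numLeaves_eq' ω n inst, numLeaves_eq' ω' m inst']
  set B := (Finset.Icc 1 k).filter (fun i => ∀ j ∈ Finset.Icc (i + 1) n, ω j ≠ i) with hB
  set C := (Finset.Icc (k+1) n).filter (fun i => ∀ j ∈ Finset.Icc (i + 1) n, ω j ≠ i) with hC
  set B' := (Finset.Icc 1 1).filter (fun i => ∀ j ∈ Finset.Icc (i + 1) m, ω' j ≠ i) with hB'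
  set C' := (Finset.Icc 2 m).filter (fun i => ∀ j ∈ Finset.Icc (i + 1) m, ω' j ≠ i) with hC'
  have hsplit : ((Finset.Icc 1 n).filter (fun i => ∀ j ∈ Finset.Icc (i + 1) n, ω j ≠ i)).card
      = B.card + C.card := by
    have hU : Finset.Icc 1 k ∪ Finset.Icc (k+1) n = Finset.Icc 1 n := by
      ext x; simp only [Finset.mem_union, Finset.mem_Icc]; omega
    have hD : Disjoint (Finset.Icc 1 k) (Finset.Icc (k+1) n) := by
      simp only [Finset.disjoint_left, Finset.mem_Icc]; omega
    rw [← hU, Finset.filter_union,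
      Finset.card_union_of_disjoint (Finset.disjoint_filter_filter hD)]
  have hsplit' : ((Finset.Icc 1 m).filter (fun i => ∀ j ∈ Finset.Icc (i + 1) m, ω' j ≠ i)).card
      = B'.card + C'.card := by
    have hU : Finset.Icc 1 1 ∪ Finset.Icc 2 m = Finset.Icc 1 m := by
      ext x; simp only [Finset.mem_union, Finset.mem_Icc]; omega
    have hD : Disjoint (Finset.Icc 1 1) (Finset.Icc 2 m) := by
      simp only [Finset.disjoint_left, Finset.mem_Icc]; omega
    rw [← hU, Finset.filter_union,
      Finset.card_union_of_disjoint (Finset.disjoint_filter_filter hD)]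
  have hCC : C'.card = C.card := by
    apply Finset.card_nbij (fun a => a + k - 1)
    · intro a ha
      simp only [hC', Finset.coe_filter, Set.mem_setOf_eq, Finset.mem_Icc] at ha
      obtain ⟨⟨ha2, ham⟩, hpred⟩ := ha
      simp only [hC, Finset.coe_filter, Set.mem_setOf_eq, Finset.mem_Icc]
      refine ⟨⟨by omega, by omega⟩, ?_⟩
      intro j hj
      have hne := hpred (j - k + 1) (by omega)
      rw [hcv (j - k + 1) (by omega) (by omega)] at hne
      have hjj : j - k + 1 + k - 1 = j := by omega
      rw [hjj] at hne
      intro hcontra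
      apply hne
      rw [hcontra, fmapLC_eq_iff k _ a hk ha2]
    · intro a _ b _ hab
      have hab' : a + k - 1 = b + k - 1 := hab
      omega
    · intro c hc
      simp only [hC, Finset.coe_filter, Set.mem_setOf_eq, Finset.mem_Icc] at hc
      obtain ⟨⟨hck, hcn⟩, hpred⟩ := hc
      refine ⟨c - k + 1, ?_, by show c - k + 1 + k - 1 = c; omega⟩
      simp only [hC', Finset.coe_filter, Set.mem_setOf_eq, Finset.mem_Icc]
      refine ⟨⟨by omega, by omega⟩, ?_⟩
      intro j' hj'
      rw [hcv j' (by omega) (by omega)]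
      intro hcontra
      rw [fmapLC_eq_iff k _ _ hk (by omega)] at hcontra
      exact hpred (j' + k - 1) (by omega) (by omega)
  have hBk : B.card ≤ k := by
    calc B.card ≤ (Finset.Icc 1 k).card := Finset.card_le_card (Finset.filter_subset _ _)
    _ = k := by rw [Nat.card_Icc]; omega
  by_cases h1 : ∀ j ∈ Finset.Icc 2 m, ω' j ≠ 1
  · have hB'1 : B'.card = 1 := by
      have hBeq : B' = {1} := by
        apply Finset.Subset.antisymm
        · intro x hx
          have hx2 := Finset.filter_subset _ _ hx
          simp only [Finset.mem_Icc] at hx2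
          simp only [Finset.mem_singleton]; omega
        · intro x hx
          simp only [Finset.mem_singleton] at hx
          subst hx
          rw [hB', Finset.mem_filter]
          exact ⟨Finset.mem_Icc.mpr ⟨le_refl 1, le_refl 1⟩, fun j hj => h1 j hj⟩
      rw [hBeq]; simp
    have hkB : k ∈ B := by
      rw [hB, Finset.mem_filter]
      refine ⟨Finset.mem_Icc.mpr ⟨hk, le_refl k⟩, ?_⟩
      intro j hj
      simp only [Finset.mem_Icc] at hj
      have h2 := h1 (j - k + 1) (Finset.mem_Icc.mpr (by omega))
      rw [hcv (j - k + 1) (by omega) (by omega)] at h2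
      have hjj : j - k + 1 + k - 1 = j := by omega
      rw [hjj] at h2
      intro heq
      rw [heq] at h2
      exact h2 ((fmapLC_eq_one_iff k k hk).mpr (le_refl k))
    have hB1 : 1 ≤ B.card := Finset.card_pos.mpr ⟨k, hkB⟩
    omega
  · push_neg at h1
    obtain ⟨j', hj'mem, hj'val⟩ := h1
    simp only [Finset.mem_Icc] at hj'mem
    have hB'0 : B'.card = 0 := by
      rw [Finset.card_eq_zero, hB', Finset.filter_eq_empty_iff]
      intro x hx
      simp only [Finset.mem_Icc] at hx
      have hx1 : x = 1 := by omega
      subst hx1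
      intro hpred
      exact hpred j' (Finset.mem_Icc.mpr (by omega)) hj'val
    set p := ω (j' + k - 1) with hpdef
    have hp1 : 1 ≤ p := hω _ (by omega) (by omega)
    have hpk : p ≤ k := by
      rw [hcv j' (by omega) (by omega), fmapLC_eq_one_iff k _ hk] at hj'val
      exact hj'val
    have hBsub : B ⊆ (Finset.Icc 1 k).erase p := by
      intro x hx
      rw [hB, Finset.mem_filter] at hx
      obtain ⟨hxm, hpred⟩ := hx
      simp only [Finset.mem_Icc] at hxm
      rw [Finset.mem_erase]
      refine ⟨?_, Finset.mem_Icc.mpr (by omega)⟩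
      intro hxp
      subst hxp
      exact hpred (j' + k - 1) (Finset.mem_Icc.mpr (by omega)) rfl
    have hBle : B.card ≤ k - 1 := by
      calc B.card ≤ ((Finset.Icc 1 k).erase p).card := Finset.card_le_card hBsub
      _ = k - 1 := by
        rw [Finset.card_erase_of_mem (Finset.mem_Icc.mpr (by omega)), Nat.card_Icc]
        omega
    omega


lemma key_coeff (w : ℕ → ℝ) (hw : ∀ i, 0 < w i) (k n : ℕ) (hk : 1 ≤ k) (hkn : k ≤ n)
    (hconst : ∀ i, k < i → w i = 1) (s : Fin (n - k + 1 + 1) → Fin (n - k + 1 + 1)) :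
    ∑ t ∈ Finset.univ.filter (fun t : Fin (n + 1) → Fin (n + 1) => sigmaLC k n t = s),
        ∏ j : Fin (n + 1), wrtStep w j.val (t j).val
      = ∏ j' : Fin (n - k + 1 + 1),
          wrtStep (fun i => if i = 1 then ∑ l ∈ Finset.Icc 1 k, w l else 1) j'.val (s j').val := by
  classical
  have hm1 : 1 ≤ n - k + 1 := by omega
  set w' : ℕ → ℝ := fun i => if i = 1 then ∑ l ∈ Finset.Icc 1 k, w l else 1 with hw'
  set sval : ℕ → ℕ := fun a => if h : a < n - k + 1 + 1 then (s ⟨a, h⟩).val else 0 with hsvaldef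
  have hsval_eq : ∀ j' : Fin (n - k + 1 + 1), sval j'.val = (s j').val := by
    intro j'
    simp only [hsvaldef, j'.isLt, dif_pos, Fin.eta]
  have hsig : ∀ t (x : ℕ) (hx : x < n - k + 1 + 1), (sigmaLC k n t ⟨x, hx⟩).val
      = contractLC k (n - k + 1) (xptLC n t) x := fun t x hx => rfl
  by_cases h0 : sval 0 = 0 ∧ sval 1 = 0
  · obtain ⟨h00, h01⟩ := h0
    set D : Fin (n + 1) → Finset (Fin (n + 1)) := fun j =>
      if k + 1 ≤ j.val then Finset.univ.filter (fun i => fmapLC k i.val = sval (j.val - k + 1))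
      else Finset.univ with hD
    have hfib : Finset.univ.filter (fun t : Fin (n + 1) → Fin (n + 1) => sigmaLC k n t = s)
        = Fintype.piFinset D := by
      ext t
      simp only [Finset.mem_filter, Finset.mem_univ, true_and, Fintype.mem_piFinset]
      constructor
      · intro heq j
        simp only [hD]
        by_cases hj : k + 1 ≤ j.val
        · rw [if_pos hj, Finset.mem_filter]
          refine ⟨Finset.mem_univ _, ?_⟩
          have hlt : j.val - k + 1 < n - k + 1 + 1 := by have := j.isLt; omega
          have hval := congrArg (fun f => (f ⟨j.val - k + 1, hlt⟩).val) heq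
          rw [hsig t (j.val - k + 1) hlt] at hval
          unfold contractLC at hval
          rw [if_pos ⟨by omega, hlt⟩] at hval
          have hidx : j.val - k + 1 + k - 1 = j.val := by omega
          rw [hidx] at hval
          have hxe : xptLC n t j.val = (t j).val := by
            unfold xptLC; rw [dif_pos j.isLt]
          rw [hxe] at hval
          rw [hval, ← hsval_eq ⟨j.val - k + 1, hlt⟩]
        · rw [if_neg hj]; exact Finset.mem_univ _
      · intro hmem
        funext a
        apply Fin.ext
        rcases a with ⟨av, halt⟩
        rw [hsig t av halt]
        rcases Nat.lt_or_ge av 2 with ha | ha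
        · unfold contractLC
          rw [if_neg (by omega)]
          rw [← hsval_eq ⟨av, halt⟩]
          have hav : av = 0 ∨ av = 1 := by omega
          show 0 = sval av
          rcases hav with h | h <;> rw [h]
          · exact h00.symm
          · exact h01.symm
        · unfold contractLC
          rw [if_pos ⟨ha, halt⟩]
          have hj : av + k - 1 < n + 1 := by omega
          have hx : xptLC n t (av + k - 1) = (t ⟨av + k - 1, hj⟩).val := by
            unfold xptLC; rw [dif_pos hj]
          rw [hx]
          have hmem' := hmem ⟨av + k - 1, hj⟩
          simp only [hD] at hmem'
          rw [if_pos (show k + 1 ≤ av + k - 1 by omega), Finset.mem_filter] at hmem'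
          have hfm := hmem'.2
          have hidx : av + k - 1 - k + 1 = av := by omega
          rw [hidx] at hfm
          have : sval av = (s ⟨av, halt⟩).val := hsval_eq ⟨av, halt⟩
          rw [hfm, this]
    rw [hfib, ← Finset.prod_univ_sum D (fun j i => wrtStep w j.val i.val)]
    set R : ℕ → ℝ := fun a => if a ≤ k then (1 : ℝ)
      else wrtStep w' (a - k + 1) (sval (a - k + 1)) with hR
    have hfac : ∀ j : Fin (n + 1), (∑ i ∈ D j, wrtStep w j.val i.val) = R j.val := by
      intro j
      by_cases hj : k + 1 ≤ j.val
      · simp only [hD, if_pos hj]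
        rw [Finset.sum_filter]
        rw [Fin.sum_univ_eq_sum_range
          (fun a => if fmapLC k a = sval (j.val - k + 1) then wrtStep w j.val a else 0) (n + 1)]
        rw [← Finset.sum_filter,
          fiber_sum w k n hk hkn hconst j.val _ hj (Nat.lt_succ_iff.mp j.isLt)]
        simp only [hR, if_neg (show ¬ j.val ≤ k by omega)]
        rfl
      · simp only [hD, if_neg hj]
        rw [Fin.sum_univ_eq_sum_range (fun a => wrtStep w j.val a) (n + 1),
          row_sum w hw n j.val (by omega)]
        simp only [hR, if_pos (show j.val ≤ k by omega)]
    rw [Finset.prod_congr rfl (fun j _ => hfac j)]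
    rw [Fin.prod_univ_eq_prod_range R (n + 1)]
    have hRHS : ∀ j' : Fin (n - k + 1 + 1), wrtStep w' j'.val (s j').val
        = (fun a => wrtStep w' a (sval a)) j'.val := by
      intro j'
      simp only [hsval_eq j']
    rw [Finset.prod_congr rfl (fun j' (_ : j' ∈ Finset.univ) => hRHS j'),
      Fin.prod_univ_eq_prod_range (fun a => wrtStep w' a (sval a)) (n - k + 1 + 1)]
    rw [Finset.range_eq_Ico, Finset.range_eq_Ico,
      ← Finset.prod_Ico_consecutive R (Nat.zero_le (k + 1)) (by omega : k + 1 ≤ n + 1)]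
    have h1 : ∏ a ∈ Finset.Ico 0 (k + 1), R a = 1 := by
      apply Finset.prod_eq_one
      intro a ha
      simp only [Finset.mem_Ico] at ha
      simp only [hR, if_pos (show a ≤ k by omega)]
    rw [h1, one_mul]
    rw [← Finset.prod_Ico_consecutive (fun a => wrtStep w' a (sval a)) (Nat.zero_le 2)
        (by omega : 2 ≤ n - k + 1 + 1)]
    have h2 : ∏ a ∈ Finset.Ico 0 2, wrtStep w' a (sval a) = 1 := by
      have : Finset.Ico 0 2 = {0, 1} := rfl
      rw [this]
      rw [Finset.prod_insert (by decide), Finset.prod_singleton]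
      simp [wrtStep, h00, h01]
    rw [h2, one_mul]
    apply Finset.prod_nbij' (fun a => a - k + 1) (fun b => b + k - 1)
    · intro a ha
      simp only [Finset.mem_Ico] at ha ⊢
      omega
    · intro b hb
      simp only [Finset.mem_Ico] at hb ⊢
      omega
    · intro a ha
      simp only [Finset.mem_Ico] at ha
      omega
    · intro b hb
      simp only [Finset.mem_Ico] at hb
      omega
    · intro a ha
      simp only [Finset.mem_Ico] at ha
      simp only [hR, if_neg (show ¬ a ≤ k by omega)]
  · have hfe : Finset.univ.filter (fun t : Fin (n + 1) → Fin (n + 1) => sigmaLC k n t = s)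
        = ∅ := by
      rw [Finset.filter_eq_empty_iff]
      intro t _
      intro heq
      apply h0
      constructor
      · have h0' : (sigmaLC k n t ⟨0, by omega⟩).val = 0 := by
          rw [hsig t 0 (by omega)]; unfold contractLC; rw [if_neg (by omega)]
        rw [show sval 0 = (s ⟨0, by omega⟩).val from hsval_eq ⟨0, by omega⟩, ← heq, h0']
      · have h1' : (sigmaLC k n t ⟨1, by omega⟩).val = 0 := by
          rw [hsig t 1 (by omega)]; unfold contractLC; rw [if_neg (by omega)]
        rw [show sval 1 = (s ⟨1, by omega⟩).val from hsval_eq ⟨1, by omega⟩, ← heq, h1']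
    rw [hfe, Finset.sum_empty]
    rcases not_and_or.mp h0 with h | h
    · symm
      apply Finset.prod_eq_zero (Finset.mem_univ (⟨0, by omega⟩ : Fin (n - k + 1 + 1)))
      have hne : (s ⟨0, by omega⟩).val ≠ 0 := by
        intro hz; exact h ((hsval_eq ⟨0, by omega⟩).trans hz)
      unfold wrtStep
      rw [if_pos (by norm_num), if_neg hne]
    · symm
      apply Finset.prod_eq_zero (Finset.mem_univ (⟨1, by omega⟩ : Fin (n - k + 1 + 1)))
      have hne : (s ⟨1, by omega⟩).val ≠ 0 := by
        intro hz; exact h ((hsval_eq ⟨1, by omega⟩).trans hz)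
      unfold wrtStep
      rw [if_pos (by norm_num), if_neg hne]

lemma map_finset_sum_LC {ι α β : Type*} [MeasurableSpace α] [MeasurableSpace β]
    {f : α → β} (hf : Measurable f) (s : Finset ι) (μ : ι → Measure α) :
    (∑ i ∈ s, μ i).map f = ∑ i ∈ s, (μ i).map f := by
  classical
  induction s using Finset.induction_on with
  | empty => simp
  | insert _ _ h ih => rw [Finset.sum_insert h, Finset.sum_insert h, Measure.map_add _ _ hf, ih]

/-- Root-splitting coupling for the number of leaves: there is a coupling of the WRT
(with `w i = 1` for `i > k`) and a Hoppe tree with root weight `θ = w 1 + ⋯ + w k`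
such that `L_{n-k+1}^θ ≤ L_n^w ≤ L_{n-k+1}^θ + k - 1` almost surely. -/
theorem leaves_coupling (w : ℕ → ℝ) (hw : ∀ i, 0 < w i) (k n : ℕ)
    (hk : 1 ≤ k) (hkn : k ≤ n) (hconst : ∀ i, k < i → w i = 1) :
    ∃ ν : Measure ((ℕ → ℕ) × (ℕ → ℕ)), IsProbabilityMeasure ν ∧
      ν.map Prod.fst = wrtMeasure w n ∧
      ν.map Prod.snd =
        wrtMeasure (fun i => if i = 1 then ∑ j ∈ Finset.Icc 1 k, w j else 1) (n - k + 1) ∧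
      ∀ᵐ q ∂ν,
        numLeaves q.2 (n - k + 1) ≤ numLeaves q.1 n ∧
        numLeaves q.1 n ≤ numLeaves q.2 (n - k + 1) + (k - 1) := by
  classical
  refine ⟨∑ t : Fin (n + 1) → Fin (n + 1),
      (ENNReal.ofReal (∏ j : Fin (n + 1), wrtStep w j.val (t j).val)) •
        Measure.dirac (xptLC n t, contractLC k (n - k + 1) (xptLC n t)), ?_, ?_, ?_, ?_⟩
  case _ =>
    -- probability measure
    constructor
    have happ := congrFun (Measure.coe_finset_sum Finset.univ
      (fun t : Fin (n + 1) → Fin (n + 1) =>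
        (ENNReal.ofReal (∏ j : Fin (n + 1), wrtStep w j.val (t j).val)) •
          Measure.dirac (xptLC n t, contractLC k (n - k + 1) (xptLC n t)))) Set.univ
    rw [happ, Finset.sum_apply]
    have hterm : ∀ t : Fin (n + 1) → Fin (n + 1),
        ((ENNReal.ofReal (∏ j : Fin (n + 1), wrtStep w j.val (t j).val)) •
          Measure.dirac (xptLC n t, contractLC k (n - k + 1) (xptLC n t))) Set.univ
        = ENNReal.ofReal (∏ j : Fin (n + 1), wrtStep w j.val (t j).val) := by
      intro t
      rw [Measure.smul_apply, measure_univ, smul_eq_mul, mul_one]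
    rw [Finset.sum_congr rfl (fun t _ => hterm t)]
    rw [← ENNReal.ofReal_sum_of_nonneg
      (fun t _ => Finset.prod_nonneg (fun j _ => wrtStep_nonneg w hw _ _))]
    have hone : ∑ t : Fin (n + 1) → Fin (n + 1), ∏ j : Fin (n + 1), wrtStep w j.val (t j).val
        = 1 := by
      have hps := Finset.prod_univ_sum (fun _ : Fin (n + 1) => (Finset.univ : Finset (Fin (n + 1))))
        (fun j i => wrtStep w j.val i.val)
      rw [← Fintype.piFinset_univ, ← hps]
      apply Finset.prod_eq_one
      intro j _
      rw [Fin.sum_univ_eq_sum_range (fun a => wrtStep w j.val a) (n + 1)]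
      exact row_sum w hw n j.val (Nat.lt_succ_iff.mp j.isLt)
    rw [hone, ENNReal.ofReal_one]
  case _ =>
    -- first marginal
    rw [map_finset_sum_LC measurable_fst]
    simp only [Measure.map_smul, Measure.map_dirac' measurable_fst]
    rfl
  case _ =>
    -- second marginal
    rw [map_finset_sum_LC measurable_snd]
    simp only [Measure.map_smul, Measure.map_dirac' measurable_snd]
    have hxs : ∀ t : Fin (n + 1) → Fin (n + 1),
        contractLC k (n - k + 1) (xptLC n t) = xptLC (n - k + 1) (sigmaLC k n t) :=
      fun t => (xpt_sigma k n t).symm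
    simp only [hxs]
    have hRHS : wrtMeasure (fun i => if i = 1 then ∑ j ∈ Finset.Icc 1 k, w j else 1)
        (n - k + 1)
        = ∑ s : Fin (n - k + 1 + 1) → Fin (n - k + 1 + 1),
            (ENNReal.ofReal (∏ j' : Fin (n - k + 1 + 1),
              wrtStep (fun i => if i = 1 then ∑ l ∈ Finset.Icc 1 k, w l else 1)
                j'.val (s j').val)) • Measure.dirac (xptLC (n - k + 1) s) := rfl
    rw [hRHS]
    rw [← Finset.sum_fiberwise Finset.univ (fun t : Fin (n + 1) → Fin (n + 1) => sigmaLC k n t)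
      (fun t => (ENNReal.ofReal (∏ j : Fin (n + 1), wrtStep w j.val (t j).val)) •
        Measure.dirac (xptLC (n - k + 1) (sigmaLC k n t)))]
    apply Finset.sum_congr rfl
    intro s _
    have hrepl : ∀ t ∈ Finset.univ.filter
        (fun t : Fin (n + 1) → Fin (n + 1) => sigmaLC k n t = s),
        (ENNReal.ofReal (∏ j : Fin (n + 1), wrtStep w j.val (t j).val)) •
          Measure.dirac (xptLC (n - k + 1) (sigmaLC k n t))
        = (ENNReal.ofReal (∏ j : Fin (n + 1), wrtStep w j.val (t j).val)) •
          Measure.dirac (xptLC (n - k + 1) s) := by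
      intro t ht
      rw [(Finset.mem_filter.mp ht).2]
    rw [Finset.sum_congr rfl hrepl, ← Finset.sum_smul]
    congr 1
    rw [← ENNReal.ofReal_sum_of_nonneg
      (fun t _ => Finset.prod_nonneg (fun j _ => wrtStep_nonneg w hw _ _)),
      key_coeff w hw k n hk hkn hconst s]
  case _ =>
    -- almost sure bound
    rw [MeasureTheory.ae_iff]
    set A := {q : (ℕ → ℕ) × (ℕ → ℕ) |
      ¬ (numLeaves q.2 (n - k + 1) ≤ numLeaves q.1 n ∧
         numLeaves q.1 n ≤ numLeaves q.2 (n - k + 1) + (k - 1))} with hA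
    have happ := congrFun (Measure.coe_finset_sum Finset.univ
      (fun t : Fin (n + 1) → Fin (n + 1) =>
        (ENNReal.ofReal (∏ j : Fin (n + 1), wrtStep w j.val (t j).val)) •
          Measure.dirac (xptLC n t, contractLC k (n - k + 1) (xptLC n t)))) A
    rw [happ, Finset.sum_apply]
    apply Finset.sum_eq_zero
    intro t _
    rw [Measure.smul_apply, smul_eq_mul]
    by_cases hc0 : ENNReal.ofReal (∏ j : Fin (n + 1), wrtStep w j.val (t j).val) = 0
    · rw [hc0, zero_mul]
    · have hω : ∀ j, 2 ≤ j → j ≤ n → 1 ≤ xptLC n t j := by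
        have hx : ∏ j : Fin (n + 1), wrtStep w j.val (t j).val ≠ 0 := by
          intro h
          exact hc0 (by rw [h, ENNReal.ofReal_zero])
        have hfacne := Finset.prod_ne_zero_iff.mp hx
        intro j h2 hjn
        have hlt : j < n + 1 := by omega
        have hf := hfacne ⟨j, hlt⟩ (Finset.mem_univ _)
        show 1 ≤ xptLC n t j
        unfold xptLC
        rw [dif_pos hlt]
        by_contra hv
        apply hf
        show wrtStep w j (t ⟨j, hlt⟩).val = 0
        unfold wrtStep
        rw [if_neg (by omega), if_neg (by omega)]
      have hP := leaves_det k n hk hkn (xptLC n t) hω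
      have hnot : (xptLC n t, contractLC k (n - k + 1) (xptLC n t)) ∉ A := by
        rw [hA]
        simp only [Set.mem_setOf_eq, not_not]
        exact hP
      rw [Measure.dirac_apply, Set.indicator_of_notMem hnot, mul_zero]
end
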